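/- Let A be an invertible symmetric positive definite n×n matrix, C a symmetric positive definite m×m matrix, and B an m×n matrix. Every eigenvalue λ of the generalized problem [[A, Bᵀ],[B, C]](x,y)ᵀ = λ [[0, -Bᵀ],[0, 0]](x,y)ᵀ with eigenvector (x,y), x ≠ 0, is real. -/

import Mathlib

open Matrix

lemma quad_im_zero {k : ℕ} {M : Matrix (Fin k) (Fin k) ℂ} (hM : M.IsHermitian)
    (x : Fin k → ℂ) : (star x ⬝ᵥ M *ᵥ x).im = 0 := by
  rw [← Complex.conj_eq_iff_im]
  calc (starRingEnd ℂ) (star x ⬝ᵥ M *ᵥ x)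
      = star (star x ⬝ᵥ M *ᵥ x) := rfl
    _ = star (M *ᵥ x) ⬝ᵥ star (star x) := (star_dotProduct_star _ _).symm
    _ = (star x ᵥ* Mᴴ) ⬝ᵥ x := by rw [star_mulVec, star_star]
    _ = star x ⬝ᵥ (Mᴴ *ᵥ x) := (dotProduct_mulVec _ _ _).symm
    _ = star x ⬝ᵥ M *ᵥ x := by rw [hM.eq]

lemma quad_re {k : ℕ} (M : Matrix (Fin k) (Fin k) ℝ) (x : Fin k → ℂ) :
    (star x ⬝ᵥ (M.map Complex.ofReal) *ᵥ x).re
      = (fun i => (x i).re) ⬝ᵥ M *ᵥ (fun i => (x i).re)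
        + (fun i => (x i).im) ⬝ᵥ M *ᵥ (fun i => (x i).im) := by
  simp only [dotProduct, mulVec, map_apply, Pi.star_apply, Complex.re_sum, Finset.mul_sum,
    ← Finset.sum_add_distrib]
  refine Finset.sum_congr rfl fun i _ => Finset.sum_congr rfl fun j _ => ?_
  simp [Complex.mul_re, Complex.mul_im]

lemma quad_re_pos {k : ℕ} {M : Matrix (Fin k) (Fin k) ℝ} (hM : M.PosDef)
    {x : Fin k → ℂ} (hx : x ≠ 0) :
    0 < (star x ⬝ᵥ (M.map Complex.ofReal) *ᵥ x).re := by
  rw [quad_re]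
  set xr : Fin k → ℝ := fun i => (x i).re
  set xi : Fin k → ℝ := fun i => (x i).im
  have hsemi := hM.posSemidef
  have hor : xr ≠ 0 ∨ xi ≠ 0 := by
    by_contra hc
    push_neg at hc
    apply hx
    funext i
    have h1 := congrFun hc.1 i
    have h2 := congrFun hc.2 i
    exact Complex.ext h1 h2
  have hr : ∀ v : Fin k → ℝ, 0 ≤ v ⬝ᵥ M *ᵥ v := fun v => by simpa using hsemi.dotProduct_mulVec_nonneg v
  have hp : ∀ v : Fin k → ℝ, v ≠ 0 → 0 < v ⬝ᵥ M *ᵥ v := fun v hv => by simpa using hM.dotProduct_mulVec_pos hv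
  rcases hor with h1 | h1
  · exact add_pos_of_pos_of_nonneg (hp _ h1) (hr _)
  · exact add_pos_of_nonneg_of_pos (hr _) (hp _ h1)

theorem stmt1 {n m : ℕ} (A : Matrix (Fin n) (Fin n) ℝ) (B : Matrix (Fin m) (Fin n) ℝ)
    (C : Matrix (Fin m) (Fin m) ℝ) (hA : A.PosDef) (hC : C.PosDef)
    (lam : ℂ) (x : Fin n → ℂ) (y : Fin m → ℂ) (hx : x ≠ 0)
    (h : (fromBlocks (A.map Complex.ofReal) (Bᵀ.map Complex.ofReal)
            (B.map Complex.ofReal) (C.map Complex.ofReal)) *ᵥ Sum.elim x y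
        = lam • ((fromBlocks 0 (-(Bᵀ.map Complex.ofReal)) 0 0) *ᵥ Sum.elim x y)) :
    lam.im = 0 := by
  set A' := A.map Complex.ofReal with hA'
  set B' := B.map Complex.ofReal with hB'
  set Bt' := Bᵀ.map Complex.ofReal with hBt'
  set C' := C.map Complex.ofReal with hC'
  rw [fromBlocks_mulVec, fromBlocks_mulVec] at h
  have h1 : A' *ᵥ x + Bt' *ᵥ y = lam • (-(Bt' *ᵥ y)) := by
    funext i
    have := congrFun h (Sum.inl i)
    simpa [neg_mulVec] using this
  have h2 : B' *ᵥ x + C' *ᵥ y = 0 := by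
    funext i
    have := congrFun h (Sum.inr i)
    simpa [neg_mulVec] using this
  set p := star x ⬝ᵥ (A' *ᵥ x) with hp
  set q := star x ⬝ᵥ (Bt' *ᵥ y) with hq
  set s := star y ⬝ᵥ (C' *ᵥ y) with hs
  -- Hermitian facts
  have hA'H : A'.IsHermitian := hA.1.map _ (fun a => by simp [Complex.conj_ofReal])
  have hC'H : C'.IsHermitian := hC.1.map _ (fun a => by simp [Complex.conj_ofReal])
  have hpim : p.im = 0 := quad_im_zero hA'H x
  have hsim : s.im = 0 := quad_im_zero hC'H y
  have hppos : 0 < p.re := quad_re_pos hA hx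
  -- pairing equations
  have e1 : p + q = -(lam * q) := by
    have := congrArg (fun v => star x ⬝ᵥ v) h1
    simpa [dotProduct_add, dotProduct_smul, dotProduct_neg, smul_eq_mul, hp, hq] using this
  have e2 : star y ⬝ᵥ (B' *ᵥ x) + s = 0 := by
    have := congrArg (fun v => star y ⬝ᵥ v) h2
    simpa [dotProduct_add, hs] using this
  -- star y ⬝ᵥ B' x = conj q
  have hconj : star y ⬝ᵥ (B' *ᵥ x) = (starRingEnd ℂ) q := by
    have hBH : Bt'ᴴ = B' := by
      ext i j
      simp [hBt', hB', conjTranspose_apply, Complex.conj_ofReal]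
    calc star y ⬝ᵥ (B' *ᵥ x) = star y ⬝ᵥ (Bt'ᴴ *ᵥ x) := by rw [hBH]
      _ = (star y ᵥ* Bt'ᴴ) ⬝ᵥ x := dotProduct_mulVec _ _ _
      _ = star (Bt' *ᵥ y) ⬝ᵥ x := by rw [star_mulVec]
      _ = star (Bt' *ᵥ y) ⬝ᵥ star (star x) := by rw [star_star]
      _ = star (star x ⬝ᵥ (Bt' *ᵥ y)) := star_dotProduct_star _ _
      _ = (starRingEnd ℂ) q := rfl
  have hqval : q = -s := by
    have : (starRingEnd ℂ) q = -s := by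
      rw [← hconj]; linear_combination e2
    have := congrArg (starRingEnd ℂ) this
    simpa [Complex.conj_eq_iff_im.mpr hsim, RingHom.map_neg,
      Complex.conj_eq_iff_im.2 hsim] using this
  have hqim : q.im = 0 := by rw [hqval]; simp [hsim]
  have hqne : q ≠ 0 := by
    intro h0
    rw [h0] at e1
    simp at e1
    have : p.re = 0 := by rw [e1]; simp only [Complex.zero_re]
    linarith
  -- conclude
  have him : (p + q).im = 0 := by simp [Complex.add_im, hpim, hqim]
  rw [e1] at him
  simp [Complex.neg_im, Complex.mul_im, hqim] at him
  rcases him with h' | h'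
  · exact h'
  · exact absurd (Complex.ext h' hqim) hqne
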